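/- Let f : ℝ → ℝ be defined by f(x) = log(1 + e^x). Then for every integer k ≥ 1 and every x ∈ ℝ, the k-th derivative of f satisfies |f^{(k)}(x)| ≤ (k−1)!. -/

import Mathlib

open Real Finset

noncomputable def sigm (x : ℝ) : ℝ := exp x / (1 + exp x)

lemma sigm_pos_den (x : ℝ) : (0:ℝ) < 1 + exp x := by positivity

lemma sigm_nonneg (x : ℝ) : 0 ≤ sigm x :=
  div_nonneg (exp_nonneg x) (sigm_pos_den x).le

lemma sigm_le_one (x : ℝ) : sigm x ≤ 1 := by
  rw [sigm, div_le_one (sigm_pos_den x)]; linarith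

lemma one_sub_sigm_nonneg (x : ℝ) : 0 ≤ 1 - sigm x := by linarith [sigm_le_one x]

lemma hasDerivAt_sigm (x : ℝ) : HasDerivAt sigm (sigm x * (1 - sigm x)) x := by
  have h := (Real.hasDerivAt_exp x).fun_div ((hasDerivAt_const x (1:ℝ)).fun_add (Real.hasDerivAt_exp x))
    (ne_of_gt (sigm_pos_den x))
  refine h.congr_deriv ?_
  have := (sigm_pos_den x).ne'
  rw [sigm]; field_simp; ring

lemma hasDerivAt_f (x : ℝ) : HasDerivAt (fun y : ℝ => log (1 + exp y)) (sigm x) x := by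
  have h := ((hasDerivAt_const x (1:ℝ)).fun_add (Real.hasDerivAt_exp x)).log
    (ne_of_gt (sigm_pos_den x))
  convert h using 1
  rw [sigm]; ring

lemma key (m : ℕ) (hm : 1 ≤ m) :
    ∃ b : ℕ → ℝ, (∀ j, 0 ≤ b j) ∧ (∀ j, m ≤ j → b j = 0) ∧
      (∑ j ∈ Finset.range m, b j ≤ Nat.factorial m) ∧
      ∀ x, iteratedDeriv m sigm x =
        ∑ j ∈ Finset.range m, (-1:ℝ)^j * b j * sigm x ^ (j+1) * (1 - sigm x)^(m-j) := by
  induction m, hm using Nat.le_induction with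
  | base =>
    refine ⟨fun j => if j = 0 then 1 else 0, ?_, ?_, ?_, ?_⟩
    · intro j; by_cases h : j = 0 <;> simp [h]
    · intro j hj
      have h : j ≠ 0 := by omega
      simp [h]
    · simp [Nat.factorial]
    · intro x
      rw [iteratedDeriv_one, (hasDerivAt_sigm x).deriv]
      simp
  | succ m hm ih =>
    obtain ⟨b, hb0, hbz, hbs, hbd⟩ := ih
    set b' : ℕ → ℝ := fun j => (j+1) * b j + (if j = 0 then 0 else ((m:ℝ)+1-j) * b (j-1)) with hb'
    refine ⟨b', ?_, ?_, ?_, ?_⟩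
    · intro j
      have h1 : (0:ℝ) ≤ ((j:ℝ)+1) * b j := mul_nonneg (by positivity) (hb0 j)
      have h2 : (0:ℝ) ≤ (if j = 0 then 0 else ((m:ℝ)+1-j) * b (j-1)) := by
        rcases Nat.eq_zero_or_pos j with h | h
        · simp [h]
        · rw [if_neg h.ne']
          rcases le_or_gt m (j-1) with h2 | h2
          · rw [hbz _ h2, mul_zero]
          · have hj : (j:ℝ) ≤ m := by exact_mod_cast (show j ≤ m by omega)
            exact mul_nonneg (by linarith) (hb0 _)
      simp only [hb']
      linarith
    · intro j hj
      have h1 : b j = 0 := hbz j (by omega)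
      have h2 : b (j-1) = 0 := hbz (j-1) (by omega)
      simp [hb', h1, h2]
    · -- sum bound
      have e1 : ∑ j ∈ range (m+1), b' j
          = ∑ j ∈ range (m+1), ((j:ℝ)+1) * b j
            + ∑ j ∈ range (m+1), (if j = 0 then 0 else ((m:ℝ)+1-j) * b (j-1)) := by
        rw [← Finset.sum_add_distrib]
      have e2 : ∑ j ∈ range (m+1), ((j:ℝ)+1) * b j = ∑ j ∈ range m, ((j:ℝ)+1) * b j := by
        rw [Finset.sum_range_succ, hbz m le_rfl]; ring
      have e3 : ∑ j ∈ range (m+1), (if j = 0 then (0:ℝ) else ((m:ℝ)+1-j) * b (j-1))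
          = ∑ i ∈ range m, ((m:ℝ)-i) * b i := by
        rw [Finset.sum_range_succ']
        norm_num
      rw [e1, e2, e3, ← Finset.sum_add_distrib]
      have : ∀ j ∈ range m, ((j:ℝ)+1) * b j + ((m:ℝ)-j) * b j = ((m:ℝ)+1) * b j := by
        intro j _; ring
      rw [Finset.sum_congr rfl this, ← Finset.mul_sum]
      calc ((m:ℝ)+1) * ∑ j ∈ range m, b j ≤ ((m:ℝ)+1) * Nat.factorial m := by
            apply mul_le_mul_of_nonneg_left hbs; positivity
        _ = (Nat.factorial (m+1) : ℝ) := by rw [Nat.factorial_succ]; push_cast; ring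
    · intro x
      have hF : iteratedDeriv m sigm = fun x =>
          ∑ j ∈ range m, (-1:ℝ)^j * b j * sigm x ^ (j+1) * (1 - sigm x)^(m-j) :=
        funext hbd
      rw [iteratedDeriv_succ, hF]
      have hder : HasDerivAt (fun x =>
          ∑ j ∈ range m, (-1:ℝ)^j * b j * sigm x ^ (j+1) * (1 - sigm x)^(m-j))
          (∑ j ∈ range m, (-1:ℝ)^j * b j *
            (((j:ℝ)+1) * sigm x ^ (j+1) * (1 - sigm x)^(m+1-j)
              - ((m:ℝ)-j) * sigm x ^ (j+2) * (1 - sigm x)^(m-j))) x := by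
        apply HasDerivAt.fun_sum
        intro j hj
        have hjm : j < m := Finset.mem_range.mp hj
        obtain ⟨p, hp⟩ : ∃ p, m - j = p + 1 := ⟨m - j - 1, by omega⟩
        have h1 := hasDerivAt_sigm x
        have h4 := ((h1.fun_pow (j+1)).fun_mul
          (((hasDerivAt_const x (1:ℝ)).fun_sub h1).fun_pow (m-j))).const_mul ((-1:ℝ)^j * b j)
        have harr : (fun x => (-1:ℝ)^j * b j * sigm x ^ (j+1) * (1 - sigm x)^(m-j))
            = fun x => (-1:ℝ)^j * b j * (sigm x ^ (j+1) * (1 - sigm x)^(m-j)) := by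
          funext y; ring
        rw [harr]
        refine h4.congr_deriv ?_
        have hmj1 : m + 1 - j = p + 2 := by omega
        have hc : ((m:ℝ) - j) = ((p:ℝ) + 1) := by
          have hmeq : m = j + p + 1 := by omega
          subst hmeq; push_cast; ring
        rw [hmj1, hc, hp]
        simp only [Nat.add_sub_cancel]
        push_cast
        ring
      rw [hder.deriv]
      -- now the algebraic regrouping
      set S := sigm x with hS
      set C := 1 - sigm x with hC
      have rhs1 : ∑ j ∈ range (m+1), (-1:ℝ)^j * b' j * S ^ (j+1) * C^(m+1-j)
          = ∑ j ∈ range (m+1), (-1:ℝ)^j * (((j:ℝ)+1) * b j) * S ^ (j+1) * C^(m+1-j)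
            + ∑ j ∈ range (m+1), (-1:ℝ)^j * (if j = 0 then 0 else ((m:ℝ)+1-j) * b (j-1)) * S ^ (j+1) * C^(m+1-j) := by
        rw [← Finset.sum_add_distrib]
        apply Finset.sum_congr rfl
        intro j _
        simp only [hb']
        push_cast
        ring
      have rhs2 : ∑ j ∈ range (m+1), (-1:ℝ)^j * (((j:ℝ)+1) * b j) * S ^ (j+1) * C^(m+1-j)
          = ∑ j ∈ range m, (-1:ℝ)^j * (((j:ℝ)+1) * b j) * S ^ (j+1) * C^(m+1-j) := by
        rw [Finset.sum_range_succ, hbz m le_rfl]; ring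
      have rhs3 : ∑ j ∈ range (m+1), (-1:ℝ)^j * (if j = 0 then (0:ℝ) else ((m:ℝ)+1-j) * b (j-1)) * S ^ (j+1) * C^(m+1-j)
          = ∑ i ∈ range m, (-1:ℝ)^(i+1) * (((m:ℝ)-i) * b i) * S ^ (i+2) * C^(m-i) := by
        rw [Finset.sum_range_succ']
        norm_num
        apply Finset.sum_congr rfl
        intro i _
        have h1 : m + 1 - (i+1) = m - i := by omega
        rw [h1]
      rw [rhs1, rhs2, rhs3, ← Finset.sum_add_distrib]
      apply Finset.sum_congr rfl
      intro j hj
      have hjm : j < m := Finset.mem_range.mp hj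
      push_cast
      ring

theorem iteratedDeriv_log_one_add_exp_le (k : ℕ) (hk : 1 ≤ k) (x : ℝ) :
    |iteratedDeriv k (fun y : ℝ => log (1 + exp y)) x| ≤ (Nat.factorial (k - 1) : ℝ) := by
  have hdf : deriv (fun y : ℝ => log (1 + exp y)) = sigm := funext fun y => (hasDerivAt_f y).deriv
  obtain ⟨m, rfl⟩ : ∃ m, k = m + 1 := ⟨k - 1, by omega⟩
  rw [iteratedDeriv_succ', hdf]
  simp only [Nat.add_sub_cancel]
  rcases Nat.eq_zero_or_pos m with rfl | hm
  · simp only [iteratedDeriv_zero, Nat.factorial_zero, Nat.cast_one]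
    rw [abs_of_nonneg (sigm_nonneg x)]
    exact sigm_le_one x
  · obtain ⟨b, hb0, hbz, hbs, hbd⟩ := key m hm
    rw [hbd x]
    calc |∑ j ∈ range m, (-1:ℝ)^j * b j * sigm x ^ (j+1) * (1 - sigm x)^(m-j)|
        ≤ ∑ j ∈ range m, |(-1:ℝ)^j * b j * sigm x ^ (j+1) * (1 - sigm x)^(m-j)| :=
          Finset.abs_sum_le_sum_abs _ _
      _ ≤ ∑ j ∈ range m, b j := by
          apply Finset.sum_le_sum
          intro j _
          rw [abs_mul, abs_mul, abs_mul, abs_pow, abs_pow, abs_pow, abs_neg, abs_one,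
            one_pow, one_mul, abs_of_nonneg (hb0 j), abs_of_nonneg (sigm_nonneg x),
            abs_of_nonneg (one_sub_sigm_nonneg x)]
          have hs1 : sigm x ^ (j+1) ≤ 1 := pow_le_one₀ (sigm_nonneg x) (sigm_le_one x)
          have hs2 : (1 - sigm x)^(m-j) ≤ 1 :=
            pow_le_one₀ (one_sub_sigm_nonneg x) (by linarith [sigm_nonneg x])
          have hp1 : 0 ≤ sigm x ^ (j+1) := pow_nonneg (sigm_nonneg x) _
          have hp2 : 0 ≤ (1 - sigm x)^(m-j) := pow_nonneg (one_sub_sigm_nonneg x) _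
          have hSC : sigm x ^ (j+1) * (1 - sigm x)^(m-j) ≤ 1 := by
            calc sigm x ^ (j+1) * (1 - sigm x)^(m-j) ≤ 1 * 1 := mul_le_mul hs1 hs2 hp2 zero_le_one
              _ = 1 := by ring
          rw [mul_assoc]
          calc b j * (sigm x ^ (j+1) * (1 - sigm x)^(m-j)) ≤ b j * 1 :=
                mul_le_mul_of_nonneg_left hSC (hb0 j)
            _ = b j := by ring
      _ ≤ (Nat.factorial m : ℝ) := hbs
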